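/- arXiv:2512.19550 — 2 statements merged into one kernel-verified Lean document; each statement's English description precedes it below -/
import Mathlib

section
/- Let y ∈ {1,...,K}, P a positive probability distribution on {1,...,K}, ỹ ∼ P, d = 𝟙[ỹ < y], and for i ∈ {1,...,K} let z̃ᵢ = (2d−1)𝟙[i = ỹ]/P(i). Fix real numbers s and θᵢ and define τ̃ᵢ = z̃ᵢ·𝟙[z̃ᵢ(s − θᵢ) ≤ 0] (where the indicator is evaluated on the random value of z̃ᵢ). Then E[τ̃ᵢ] = zᵢ·𝟙[zᵢ(s − θᵢ) ≤ 0] where zᵢ = 𝟙[i < y] − 𝟙[i ≥ y]. -/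
open Finset

theorem stmt_7 (K y : ℕ) (hK : 1 ≤ K) (hy1 : 1 ≤ y) (hy2 : y ≤ K)
    (P : ℕ → ℝ) (hPpos : ∀ i ∈ Finset.Icc 1 K, 0 < P i)
    (hPsum : ∑ i ∈ Finset.Icc 1 K, P i = 1)
    (s : ℝ) (θ : ℕ → ℝ)
    (zt : ℕ → ℕ → ℝ)
    (hzt : ∀ i j, zt i j =
      (2 * (if j < y then (1 : ℝ) else 0) - 1) * (if i = j then (1 : ℝ) else 0) / P i)
    (z : ℕ → ℝ)
    (hz : ∀ i, z i = (if i < y then (1 : ℝ) else 0) - (if y ≤ i then (1 : ℝ) else 0)) :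
    ∀ i ∈ Finset.Icc 1 K,
      ∑ j ∈ Finset.Icc 1 K,
        P j * (zt i j * (if zt i j * (s - θ i) ≤ 0 then (1 : ℝ) else 0))
      = z i * (if z i * (s - θ i) ≤ 0 then (1 : ℝ) else 0) := by
  intro i hi
  have hPi := hPpos i hi
  have hzi : zt i i = z i / P i := by
    rw [hzt, hz]
    by_cases h : i < y
    · simp [h, not_le.mpr h]
      ring
    · simp [h, not_lt.mp h]
  rw [Finset.sum_eq_single i]
  · rw [hzi]
    have hiff : z i / P i * (s - θ i) ≤ 0 ↔ z i * (s - θ i) ≤ 0 := by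
      rw [div_mul_eq_mul_div, div_nonpos_iff]
      constructor
      · rintro (⟨h1, h2⟩ | ⟨h1, h2⟩)
        · linarith
        · exact h1
      · intro h
        exact Or.inr ⟨h, hPi.le⟩
    rw [if_congr hiff rfl rfl]
    field_simp
  · intro j hj hji
    have : zt i j = 0 := by
      rw [hzt]
      have : i ≠ j := fun h => hji h.symm
      simp [this]
    simp [this]
  · intro h
    exact absurd hi h
end

section
/- Let P = (1−γ)P₁ + γP₂ be the mixture distribution on {1,...,K} where P₁(i) = 𝟙[i = ŷ], P₂(i) = (1 + d_max − |i−ŷ|)/Z with d_max = max(ŷ, K−ŷ), Z the normalizer, and 0 < γ ≤ 1. Then ∑_{k=1}^K 1/P(k) ≤ (2K²/γ)(1 + ln K). -/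
open Finset

theorem stmt_10 (K yh : ℕ) (hK : 1 ≤ K) (h1 : 1 ≤ yh) (h2 : yh ≤ K)
    (γ : ℝ) (hγ0 : 0 < γ) (hγ1 : γ ≤ 1)
    (dmax Z : ℝ)
    (hd : dmax = max (yh : ℝ) ((K : ℝ) - yh))
    (hZ : Z = (K : ℝ) + (K : ℝ) * dmax - ∑ i ∈ Finset.Icc 1 K, |(i : ℝ) - (yh : ℝ)|)
    (P : ℕ → ℝ)
    (hP : ∀ k, P k = (1 - γ) * (if k = yh then (1 : ℝ) else 0)
                      + γ * (1 + dmax - |(k : ℝ) - (yh : ℝ)|) / Z) :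
    ∑ k ∈ Finset.Icc 1 K, 1 / P k ≤ (2 * (K : ℝ) ^ 2 / γ) * (1 + Real.log K) := by
  have hK1 : (1:ℝ) ≤ (K:ℝ) := by exact_mod_cast hK
  have hy1 : (1:ℝ) ≤ (yh:ℝ) := by exact_mod_cast h1
  have hyK : (yh:ℝ) ≤ (K:ℝ) := by exact_mod_cast h2
  set v : ℕ → ℝ := fun k => 1 + dmax - |(k : ℝ) - (yh : ℝ)| with hv
  have hdy : (yh:ℝ) ≤ dmax := hd ▸ le_max_left _ _
  have hdKy : (K:ℝ) - (yh:ℝ) ≤ dmax := hd ▸ le_max_right _ _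
  have hdK : dmax ≤ (K:ℝ) := by rw [hd]; exact max_le hyK (by linarith)
  -- lower bounds on v
  have hvlow : ∀ k ∈ Icc 1 K, (1:ℝ) ≤ v k := by
    intro k hk
    rw [mem_Icc] at hk
    have hk1 : (1:ℝ) ≤ (k:ℝ) := by exact_mod_cast hk.1
    have hkK : (k:ℝ) ≤ (K:ℝ) := by exact_mod_cast hk.2
    simp only [hv]
    rcases le_total (k:ℝ) (yh:ℝ) with h | h
    · rw [abs_of_nonpos (by linarith)]; linarith
    · rw [abs_of_nonneg (by linarith)]; linarith
  have hvle1 : ∀ k ∈ Icc 1 yh, (k:ℝ) ≤ v k := by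
    intro k hk
    rw [mem_Icc] at hk
    have hkY : (k:ℝ) ≤ (yh:ℝ) := by exact_mod_cast hk.2
    simp only [hv]
    rw [abs_of_nonpos (by linarith)]; linarith
  have hvle2 : ∀ k ∈ Icc (yh+1) K, (K:ℝ) + 1 - (k:ℝ) ≤ v k := by
    intro k hk
    rw [mem_Icc] at hk
    have hkY : (yh:ℝ) + 1 ≤ (k:ℝ) := by exact_mod_cast hk.1
    simp only [hv]
    rw [abs_of_nonneg (by linarith)]; linarith
  have hvpos : ∀ k ∈ Icc 1 K, (0:ℝ) < v k := fun k hk => lt_of_lt_of_le one_pos (hvlow k hk)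
  -- Z is the sum of v
  have habs_nonneg : (0:ℝ) ≤ ∑ i ∈ Icc 1 K, |(i : ℝ) - (yh : ℝ)| :=
    Finset.sum_nonneg fun i _ => abs_nonneg _
  have hZsum : Z = ∑ k ∈ Icc 1 K, v k := by
    rw [hZ]
    simp only [hv]
    rw [Finset.sum_sub_distrib, Finset.sum_const, Nat.card_Icc]
    have : (K + 1 - 1 : ℕ) = K := by omega
    rw [this]
    push_cast
    ring
  have hZK : (K:ℝ) ≤ Z := by
    rw [hZsum]
    calc (K:ℝ) = ∑ _k ∈ Icc 1 K, (1:ℝ) := by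
          rw [Finset.sum_const, Nat.card_Icc]; simp
      _ ≤ ∑ k ∈ Icc 1 K, v k := Finset.sum_le_sum hvlow
  have hZpos : (0:ℝ) < Z := lt_of_lt_of_le (by linarith) hZK
  -- P lower bound
  have hPge : ∀ k ∈ Icc 1 K, γ * v k / Z ≤ P k := by
    intro k hk
    rw [hP k]
    have hind : (0:ℝ) ≤ (1 - γ) * (if k = yh then (1 : ℝ) else 0) := by
      apply mul_nonneg (by linarith)
      split <;> norm_num
    simp only [hv]
    linarith
  have hPpos : ∀ k ∈ Icc 1 K, (0:ℝ) < P k := by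
    intro k hk
    exact lt_of_lt_of_le (div_pos (mul_pos hγ0 (hvpos k hk)) hZpos) (hPge k hk)
  -- step 1: bound by (Z/γ) * sum of 1/v
  have step1 : ∑ k ∈ Icc 1 K, 1 / P k ≤ (Z / γ) * ∑ k ∈ Icc 1 K, 1 / v k := by
    rw [Finset.mul_sum]
    apply Finset.sum_le_sum
    intro k hk
    have hvk := hvpos k hk
    have h0 : (0:ℝ) < γ * v k / Z := by positivity
    calc 1 / P k ≤ 1 / (γ * v k / Z) := one_div_le_one_div_of_le h0 (hPge k hk)
      _ = Z / γ * (1 / v k) := by field_simp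
  -- the harmonic sum
  set H : ℝ := ∑ k ∈ Icc 1 K, 1 / (k:ℝ) with hH
  have hHnonneg : (0:ℝ) ≤ H := Finset.sum_nonneg fun k _ => by positivity
  have hHlog : H ≤ 1 + Real.log K := by
    have := harmonic_le_one_add_log K
    rw [harmonic_eq_sum_Icc] at this
    rw [hH]
    simp only [one_div]
    calc ∑ k ∈ Icc 1 K, ((k:ℝ))⁻¹ = ((∑ i ∈ Icc 1 K, ((i:ℚ))⁻¹ : ℚ) : ℝ) := by
          push_cast; rfl
      _ ≤ 1 + Real.log K := this
  -- sum of 1/v over the first block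
  have hblock1 : ∀ m, m ≤ yh → ∑ k ∈ Icc 1 m, 1 / v k ≤ H := by
    intro m hm
    calc ∑ k ∈ Icc 1 m, 1 / v k ≤ ∑ k ∈ Icc 1 m, 1 / (k:ℝ) := by
          apply Finset.sum_le_sum
          intro k hk
          rw [mem_Icc] at hk
          have hk' : k ∈ Icc 1 yh := mem_Icc.mpr ⟨hk.1, le_trans hk.2 hm⟩
          have hkpos : (0:ℝ) < (k:ℝ) := by exact_mod_cast hk.1
          exact one_div_le_one_div_of_le hkpos (hvle1 k hk')
      _ ≤ H := by
          apply Finset.sum_le_sum_of_subset_of_nonneg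
          · exact Finset.Icc_subset_Icc_right (le_trans hm h2)
          · intro i _ _; positivity
  -- main product bound
  have hprod : Z * (∑ k ∈ Icc 1 K, 1 / v k) ≤ 2 * (K:ℝ)^2 * H := by
    rcases eq_or_lt_of_le h2 with hyh | hyh
    · -- yh = K
      have hS : ∑ k ∈ Icc 1 K, 1 / v k ≤ H := hblock1 K (le_of_eq hyh.symm)
      have hZle : Z ≤ 2 * (K:ℝ)^2 := by
        rw [hZ]
        nlinarith
      have hSnonneg : (0:ℝ) ≤ ∑ k ∈ Icc 1 K, 1 / v k :=
        Finset.sum_nonneg fun k hk => le_of_lt (one_div_pos.mpr (hvpos k hk))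
      calc Z * (∑ k ∈ Icc 1 K, 1 / v k) ≤ (2 * (K:ℝ)^2) * H := by
            apply mul_le_mul hZle hS hSnonneg (by positivity)
        _ = 2 * (K:ℝ)^2 * H := by ring
    · -- yh < K
      have hyK' : (yh:ℝ) ≤ (K:ℝ) - 1 := by
        have : yh + 1 ≤ K := hyh
        have : ((yh:ℝ)) + 1 ≤ (K:ℝ) := by exact_mod_cast this
        linarith
      have hdK' : dmax ≤ (K:ℝ) - 1 := by
        rw [hd]; exact max_le hyK' (by linarith)
      have hZle : Z ≤ (K:ℝ)^2 := by
        rw [hZ]; nlinarith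
      -- split the sum
      have hsplit : ∑ k ∈ Icc 1 K, 1 / v k
          = (∑ k ∈ Icc 1 yh, 1 / v k) + ∑ k ∈ Icc (yh+1) K, 1 / v k := by
        rw [show Icc 1 K = Ioc 0 K from by rw [← Finset.Icc_add_one_left_eq_Ioc]; rfl,
            show Icc 1 yh = Ioc 0 yh from by rw [← Finset.Icc_add_one_left_eq_Ioc]; rfl,
            Finset.Icc_add_one_left_eq_Ioc]
        exact (Finset.sum_Ioc_consecutive _ (Nat.zero_le yh) h2).symm
      have hS2 : ∑ k ∈ Icc (yh+1) K, 1 / v k ≤ H := by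
        calc ∑ k ∈ Icc (yh+1) K, 1 / v k
            ≤ ∑ k ∈ Icc (yh+1) K, 1 / ((K + 1 - k : ℕ):ℝ) := by
              apply Finset.sum_le_sum
              intro k hk
              have hkm := mem_Icc.mp hk
              have hcast : ((K + 1 - k : ℕ):ℝ) = (K:ℝ) + 1 - (k:ℝ) := by
                have : k ≤ K + 1 := by omega
                push_cast [Nat.cast_sub this]
                ring
              rw [hcast]
              have hpos : (0:ℝ) < (K:ℝ) + 1 - (k:ℝ) := by
                have : (k:ℝ) ≤ (K:ℝ) := by exact_mod_cast hkm.2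
                linarith
              exact one_div_le_one_div_of_le hpos (hvle2 k hk)
          _ = ∑ j ∈ Icc 1 (K - yh), 1 / ((j:ℕ):ℝ) := by
              apply Finset.sum_nbij' (fun k => K + 1 - k) (fun j => K + 1 - j)
              · intro k hk; rw [mem_Icc] at hk ⊢; omega
              · intro j hj; rw [mem_Icc] at hj ⊢; omega
              · intro k hk; rw [mem_Icc] at hk; omega
              · intro j hj; rw [mem_Icc] at hj; omega
              · intro k hk; rfl
          _ ≤ H := by
              apply Finset.sum_le_sum_of_subset_of_nonneg
              · exact Finset.Icc_subset_Icc_right (by omega)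
              · intro i _ _; positivity
      have hS : ∑ k ∈ Icc 1 K, 1 / v k ≤ 2 * H := by
        rw [hsplit]
        have := hblock1 yh le_rfl
        linarith
      have hSnonneg : (0:ℝ) ≤ ∑ k ∈ Icc 1 K, 1 / v k :=
        Finset.sum_nonneg fun k hk => le_of_lt (one_div_pos.mpr (hvpos k hk))
      calc Z * (∑ k ∈ Icc 1 K, 1 / v k) ≤ (K:ℝ)^2 * (2 * H) := by
            apply mul_le_mul hZle hS hSnonneg (by positivity)
        _ = 2 * (K:ℝ)^2 * H := by ring
  -- conclude
  have hfinal : (Z / γ) * ∑ k ∈ Icc 1 K, 1 / v k ≤ (2 * (K : ℝ) ^ 2 / γ) * (1 + Real.log K) := by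
    have hlog0 : (0:ℝ) ≤ Real.log K := Real.log_nonneg hK1
    have h1' : (Z / γ) * ∑ k ∈ Icc 1 K, 1 / v k = Z * (∑ k ∈ Icc 1 K, 1 / v k) / γ := by ring
    have h2' : (2 * (K : ℝ) ^ 2 / γ) * (1 + Real.log K)
        = 2 * (K:ℝ)^2 * (1 + Real.log K) / γ := by ring
    rw [h1', h2']
    rw [div_le_div_iff_of_pos_right hγ0]
    calc Z * (∑ k ∈ Icc 1 K, 1 / v k) ≤ 2 * (K:ℝ)^2 * H := hprod
      _ ≤ 2 * (K:ℝ)^2 * (1 + Real.log K) := by nlinarith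
  exact le_trans step1 hfinal
end
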